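/- Suppose C_1 < C_2 and ρ_{12} = 0. Then for every Q with ρ_{11} ≤ Q < 1, P_cor^opt(Q) = C_2(1−Q), and this value is attained by the POVM determined by ρ_0^{1/2}M_0ρ_0^{1/2} = ρ_{11}|ν_1⟩⟨ν_1| + (Q−ρ_{11})|ν_2⟩⟨ν_2|, M_1 = 0, ρ_0^{1/2}M_2ρ_0^{1/2} = (1−Q)|ν_2⟩⟨ν_2|. -/

import Mathlib

open Matrix ComplexOrder

noncomputable section

namespace FRIR

lemma vmv_mul_vmv (a b c d : Fin 2 → ℂ) :
    vecMulVec a b * vecMulVec c d = (b ⬝ᵥ c) • vecMulVec a d := by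
  ext i j
  simp only [Matrix.mul_apply, vecMulVec_apply, Matrix.smul_apply, dotProduct, smul_eq_mul,
    Finset.sum_mul]
  exact Finset.sum_congr rfl fun k _ => by ring

lemma mul_vmv (M : Matrix (Fin 2) (Fin 2) ℂ) (c d : Fin 2 → ℂ) :
    M * vecMulVec c d = vecMulVec (M *ᵥ c) d := by
  ext i j
  simp only [Matrix.mul_apply, vecMulVec_apply, mulVec, dotProduct, Finset.sum_mul]
  exact Finset.sum_congr rfl fun k _ => by ring

lemma vmv_mul (M : Matrix (Fin 2) (Fin 2) ℂ) (a b : Fin 2 → ℂ) :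
    vecMulVec a b * M = vecMulVec a (b ᵥ* M) := by
  ext i j
  simp only [Matrix.mul_apply, vecMulVec_apply, vecMul, dotProduct, Finset.mul_sum]
  exact Finset.sum_congr rfl fun k _ => by ring

lemma trace_vmv (a b : Fin 2 → ℂ) : (vecMulVec a b).trace = a ⬝ᵥ b := by
  simp [Matrix.trace, Matrix.diag, vecMulVec_apply, dotProduct]

lemma psd_vmv (v : Fin 2 → ℂ) (c : ℝ) (hc : 0 ≤ c) :
    ((c : ℂ) • vecMulVec v (star v)).PosSemidef := by
  refine Matrix.PosSemidef.of_dotProduct_mulVec_nonneg ?_ ?_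
  · ext i j
    simp [conjTranspose_apply, vecMulVec_apply, mul_comm]
  · intro x
    have h1 : ((c : ℂ) • vecMulVec v (star v)) *ᵥ x = ((c : ℂ) * (star v ⬝ᵥ x)) • v := by
      ext i
      simp only [mulVec, dotProduct, Matrix.smul_apply, vecMulVec_apply, smul_eq_mul,
        Pi.smul_apply, Finset.mul_sum, Finset.sum_mul]
      exact Finset.sum_congr rfl fun k _ => by ring
    rw [h1, dotProduct_smul, smul_eq_mul]
    have h2 : star x ⬝ᵥ v = star (star v ⬝ᵥ x) := by
      simp [dotProduct, mul_comm]
    rw [h2]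
    have h3 : (c : ℂ) * (star v ⬝ᵥ x) * star (star v ⬝ᵥ x)
        = (c : ℂ) * (star (star v ⬝ᵥ x) * (star v ⬝ᵥ x)) := by ring
    rw [h3]
    exact mul_nonneg (Complex.zero_le_real.mpr hc) (star_mul_self_nonneg _)

lemma trace_re_nonneg {A : Matrix (Fin 2) (Fin 2) ℂ} (hA : A.PosSemidef) :
    0 ≤ A.trace.re := by
  have hd : ∀ i, 0 ≤ A i i := fun i => by
    have := hA.dotProduct_mulVec_nonneg (Pi.single i 1)
    simpa [dotProduct, mulVec, Pi.single_apply, Finset.mul_sum] using this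
  have : A.trace.re = ∑ i, (A i i).re := by
    simp [Matrix.trace, Matrix.diag, Complex.re_sum]
  rw [this]
  exact Finset.sum_nonneg fun i _ => (Complex.nonneg_iff.mp (hd i)).1

open scoped MatrixOrder in
lemma trace_mul_re_nonneg {A B : Matrix (Fin 2) (Fin 2) ℂ}
    (hA : A.PosSemidef) (hB : B.PosSemidef) : 0 ≤ (A * B).trace.re := by
  set R := CFC.sqrt B with hRdef
  have hR : R.PosSemidef := (CFC.sqrt_nonneg B).posSemidef
  have key : (R * A * R).PosSemidef := by
    have := hA.conjTranspose_mul_mul_same R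
    rwa [hR.1.eq] at this
  have htr : (R * A * R).trace = (A * B).trace := by
    rw [Matrix.trace_mul_cycle, hRdef, CFC.sqrt_mul_sqrt_self B hB.nonneg, Matrix.trace_mul_comm]
  have := trace_re_nonneg key
  rwa [htr] at this

lemma ortho_resolution (ν₁ ν₂ : Fin 2 → ℂ)
    (h1 : star ν₁ ⬝ᵥ ν₁ = 1) (h2 : star ν₂ ⬝ᵥ ν₂ = 1) (h12 : star ν₁ ⬝ᵥ ν₂ = 0) :
    vecMulVec ν₁ (star ν₁) + vecMulVec ν₂ (star ν₂) = 1 := by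
  have h21 : star ν₂ ⬝ᵥ ν₁ = 0 := by
    have := congrArg star h12
    rwa [star_dotProduct, star_star, star_zero] at this
  set U : Matrix (Fin 2) (Fin 2) ℂ := Matrix.of fun i k => if k = 0 then ν₁ i else ν₂ i with hU
  have hUl : Uᴴ * U = 1 := by
    ext k l
    fin_cases k <;> fin_cases l <;>
      simp only [Matrix.mul_apply, conjTranspose_apply, hU, Matrix.of_apply,
        Matrix.one_apply] <;>
      simp only [dotProduct] at h1 h2 h12 h21 <;>
      simp [Pi.star_apply] <;>
      first
        | exact h1 | exact h2 | exact h12 | exact h21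
        | simpa using h1 | simpa using h2 | simpa using h12 | simpa using h21
  have hUr : U * Uᴴ = 1 := mul_eq_one_comm.mp hUl
  have : vecMulVec ν₁ (star ν₁) + vecMulVec ν₂ (star ν₂) = U * Uᴴ := by
    ext i j
    simp [Matrix.mul_apply, conjTranspose_apply, hU, vecMulVec_apply, Fin.sum_univ_two]
  rw [this, hUr]


/-- A three-outcome POVM on a qubit: `M₀` is the inconclusive outcome. -/
def IsPOVM (M₀ M₁ M₂ : Matrix (Fin 2) (Fin 2) ℂ) : Prop :=
  M₀.PosSemidef ∧ M₁.PosSemidef ∧ M₂.PosSemidef ∧ M₀ + M₁ + M₂ = 1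

/-- `ρ₀ = q₁ρ₁ + q₂ρ₂`. -/
def rho0 (q₁ q₂ : ℝ) (ρ₁ ρ₂ : Matrix (Fin 2) (Fin 2) ℂ) : Matrix (Fin 2) (Fin 2) ℂ :=
  (q₁ : ℂ) • ρ₁ + (q₂ : ℂ) • ρ₂

/-- The probability of the inconclusive result, `P_I = tr(ρ₀M₀)`. -/
def PIof (q₁ q₂ : ℝ) (ρ₁ ρ₂ M₀ : Matrix (Fin 2) (Fin 2) ℂ) : ℝ :=
  (Matrix.trace (rho0 q₁ q₂ ρ₁ ρ₂ * M₀)).re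

/-- `P_cor = q₁tr(ρ₁M₁) + q₂tr(ρ₂M₂)`. -/
def Pcor (q₁ q₂ : ℝ) (ρ₁ ρ₂ M₁ M₂ : Matrix (Fin 2) (Fin 2) ℂ) : ℝ :=
  q₁ * (Matrix.trace (ρ₁ * M₁)).re + q₂ * (Matrix.trace (ρ₂ * M₂)).re

/-- `P̄_cor = q·tr(ρ₀M₀) + q₁tr(ρ₁M₁) + q₂tr(ρ₂M₂)`. -/
def PbarCor (q q₁ q₂ : ℝ) (ρ₁ ρ₂ M₀ M₁ M₂ : Matrix (Fin 2) (Fin 2) ℂ) : ℝ :=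
  q * PIof q₁ q₂ ρ₁ ρ₂ M₀ + Pcor q₁ q₂ ρ₁ ρ₂ M₁ M₂

/-- `P̄_cor^opt(q)`: the maximal value of `P̄_cor` over all POVMs. -/
def PbarOpt (q q₁ q₂ : ℝ) (ρ₁ ρ₂ : Matrix (Fin 2) (Fin 2) ℂ) : ℝ :=
  sSup {x : ℝ | ∃ M₀ M₁ M₂, IsPOVM M₀ M₁ M₂ ∧ PbarCor q q₁ q₂ ρ₁ ρ₂ M₀ M₁ M₂ = x}

/-- `P_cor^opt(Q)`: the maximal value of `P_cor` over POVMs with `P_I = Q`. -/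
def PcorOpt (Q q₁ q₂ : ℝ) (ρ₁ ρ₂ : Matrix (Fin 2) (Fin 2) ℂ) : ℝ :=
  sSup {x : ℝ | ∃ M₀ M₁ M₂, IsPOVM M₀ M₁ M₂ ∧
    PIof q₁ q₂ ρ₁ ρ₂ M₀ = Q ∧ Pcor q₁ q₂ ρ₁ ρ₂ M₁ M₂ = x}

/-- `P_I(q) = { tr(ρ₀M₀) : POVMs attaining P̄_cor^opt(q) }`. -/
def PIset (q q₁ q₂ : ℝ) (ρ₁ ρ₂ : Matrix (Fin 2) (Fin 2) ℂ) : Set ℝ :=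
  {Q : ℝ | ∃ M₀ M₁ M₂, IsPOVM M₀ M₁ M₂ ∧
    PbarCor q q₁ q₂ ρ₁ ρ₂ M₀ M₁ M₂ = PbarOpt q q₁ q₂ ρ₁ ρ₂ ∧ PIof q₁ q₂ ρ₁ ρ₂ M₀ = Q}

/-- `q₀⁽⁰⁾ = sup{q > 0 : 0 ∈ P_I(q)}`. -/
def q0low (q₁ q₂ : ℝ) (ρ₁ ρ₂ : Matrix (Fin 2) (Fin 2) ℂ) : ℝ :=
  sSup {q : ℝ | 0 < q ∧ (0 : ℝ) ∈ PIset q q₁ q₂ ρ₁ ρ₂}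

/-- `q₀⁽¹⁾ = inf{q > 0 : 1 ∈ P_I(q)}`. -/
def q0high (q₁ q₂ : ℝ) (ρ₁ ρ₂ : Matrix (Fin 2) (Fin 2) ℂ) : ℝ :=
  sInf {q : ℝ | 0 < q ∧ (1 : ℝ) ∈ PIset q q₁ q₂ ρ₁ ρ₂}

/-- If `C₁ < C₂` and `ρ₁₂ = 0`, then for `ρ₁₁ ≤ Q < 1`,
`P_cor^opt(Q) = C₂(1−Q)`, attained by the POVM with
`ρ₀^½M₀ρ₀^½ = ρ₁₁|ν₁⟩⟨ν₁| + (Q−ρ₁₁)|ν₂⟩⟨ν₂|`, `M₁ = 0`,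
`ρ₀^½M₂ρ₀^½ = (1−Q)|ν₂⟩⟨ν₂|`. -/
theorem stmt15
    (q₁ q₂ : ℝ) (ρ₁ ρ₂ : Matrix (Fin 2) (Fin 2) ℂ)
    (hq₁ : 0 < q₁) (hq₂ : 0 < q₂) (hq : q₁ + q₂ = 1)
    (hρ₁ : ρ₁.PosSemidef) (htr₁ : ρ₁.trace = 1)
    (hρ₂ : ρ₂.PosSemidef) (htr₂ : ρ₂.trace = 1)
    (hρ0 : (rho0 q₁ q₂ ρ₁ ρ₂).PosDef)
    (S : Matrix (Fin 2) (Fin 2) ℂ) (hS : S.PosSemidef) (hSS : S * S = rho0 q₁ q₂ ρ₁ ρ₂)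
    (ν₁ ν₂ : Fin 2 → ℂ)
    (hν₁ : star ν₁ ⬝ᵥ ν₁ = 1) (hν₂ : star ν₂ ⬝ᵥ ν₂ = 1) (hν₁₂ : star ν₁ ⬝ᵥ ν₂ = 0)
    (C₁ C₂ : ℝ) (hC12 : C₁ ≤ C₂) (hCsum : 1 < C₁ + C₂)
    (hbar₁ : S * ((C₁ : ℂ) • vecMulVec ν₁ (star ν₁)
        + ((1 - C₂ : ℝ) : ℂ) • vecMulVec ν₂ (star ν₂)) * S = (q₁ : ℂ) • ρ₁)
    (hbar₂ : S * (((1 - C₁ : ℝ) : ℂ) • vecMulVec ν₁ (star ν₁)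
        + (C₂ : ℂ) • vecMulVec ν₂ (star ν₂)) * S = (q₂ : ℂ) • ρ₂)
    (ρ11 ρ22 : ℝ) (ρ12 : ℂ)
    (h11 : (ρ11 : ℂ) = star ν₁ ⬝ᵥ (rho0 q₁ q₂ ρ₁ ρ₂ *ᵥ ν₁))
    (h22 : (ρ22 : ℂ) = star ν₂ ⬝ᵥ (rho0 q₁ q₂ ρ₁ ρ₂ *ᵥ ν₂))
    (h12 : ρ12 = star ν₁ ⬝ᵥ (rho0 q₁ q₂ ρ₁ ρ₂ *ᵥ ν₂))
    (hClt : C₁ < C₂) (h12z : ρ12 = 0) :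
    ∀ Q : ℝ, ρ11 ≤ Q → Q < 1 →
      PcorOpt Q q₁ q₂ ρ₁ ρ₂ = C₂ * (1 - Q) ∧
        ∃ M₀ M₁ M₂ : Matrix (Fin 2) (Fin 2) ℂ, IsPOVM M₀ M₁ M₂ ∧
          PIof q₁ q₂ ρ₁ ρ₂ M₀ = Q ∧
          Pcor q₁ q₂ ρ₁ ρ₂ M₁ M₂ = C₂ * (1 - Q) ∧
          S * M₀ * S = (ρ11 : ℂ) • vecMulVec ν₁ (star ν₁)
            + ((Q - ρ11 : ℝ) : ℂ) • vecMulVec ν₂ (star ν₂) ∧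
          M₁ = 0 ∧
          S * M₂ * S = ((1 - Q : ℝ) : ℂ) • vecMulVec ν₂ (star ν₂) := by
  intro Q hQlo hQhi
  set R := rho0 q₁ q₂ ρ₁ ρ₂ with hRdef
  set P₁ := vecMulVec ν₁ (star ν₁) with hP₁def
  set P₂ := vecMulVec ν₂ (star ν₂) with hP₂def
  have h21 : star ν₂ ⬝ᵥ ν₁ = 0 := by
    have := congrArg star hν₁₂
    rwa [star_dotProduct, star_star, star_zero] at this
  have hres : P₁ + P₂ = 1 := ortho_resolution ν₁ ν₂ hν₁ hν₂ hν₁₂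
  have hP11 : P₁ * P₁ = P₁ := by rw [hP₁def, vmv_mul_vmv, hν₁, one_smul]
  have hP12 : P₁ * P₂ = 0 := by rw [hP₁def, hP₂def, vmv_mul_vmv, hν₁₂, zero_smul]
  have hP21 : P₂ * P₁ = 0 := by rw [hP₁def, hP₂def, vmv_mul_vmv, h21, zero_smul]
  have hP22 : P₂ * P₂ = P₂ := by rw [hP₂def, vmv_mul_vmv, hν₂, one_smul]
  have hν₁ne : ν₁ ≠ 0 := by intro h; rw [h] at hν₁; simp at hν₁
  have hν₂ne : ν₂ ≠ 0 := by intro h; rw [h] at hν₂; simp at hν₂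
  have h11' : star ν₁ ⬝ᵥ (R *ᵥ ν₁) = (ρ11 : ℂ) := h11.symm
  have h22' : star ν₂ ⬝ᵥ (R *ᵥ ν₂) = (ρ22 : ℂ) := h22.symm
  have h12' : star ν₁ ⬝ᵥ (R *ᵥ ν₂) = 0 := by rw [← h12, h12z]
  have h21' : star ν₂ ⬝ᵥ (R *ᵥ ν₁) = 0 := by
    have := congrArg star h12'
    rw [star_zero, star_dotProduct, star_star, star_mulVec] at this
    rwa [← Matrix.dotProduct_mulVec, hρ0.1.eq] at this
  have piece : ∀ (a b : Fin 2 → ℂ) (M : Matrix (Fin 2) (Fin 2) ℂ),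
      vecMulVec a (star a) * M * vecMulVec b (star b)
        = (star a ⬝ᵥ (M *ᵥ b)) • vecMulVec a (star b) := by
    intro a b M
    rw [Matrix.mul_assoc, mul_vmv, vmv_mul_vmv]
  have hdiag : R = (ρ11 : ℂ) • P₁ + (ρ22 : ℂ) • P₂ := by
    have e1 : (P₁ + P₂) * R * (P₁ + P₂) = R := by rw [hres, one_mul, mul_one]
    have e2 : (P₁ + P₂) * R * (P₁ + P₂)
        = P₁ * R * P₁ + P₁ * R * P₂ + P₂ * R * P₁ + P₂ * R * P₂ := by
      rw [add_mul, add_mul, mul_add, mul_add]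
      abel
    rw [← e1, e2, hP₁def, hP₂def, piece, piece, piece, piece, h11', h12', h21', h22',
      zero_smul, zero_smul, add_zero, add_zero]
  have hρ11pos : 0 < ρ11 := by
    have h := hρ0.dotProduct_mulVec_pos hν₁ne
    rw [← h11] at h
    exact Complex.zero_lt_real.mp h
  have hρ22pos : 0 < ρ22 := by
    have h := hρ0.dotProduct_mulVec_pos hν₂ne
    rw [← h22] at h
    exact Complex.zero_lt_real.mp h
  have htrP₁ : P₁.trace = 1 := by rw [hP₁def, trace_vmv, dotProduct_comm, hν₁]
  have htrP₂ : P₂.trace = 1 := by rw [hP₂def, trace_vmv, dotProduct_comm, hν₂]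
  have htrR : R.trace = 1 := by
    have e : R.trace = (q₁ : ℂ) * ρ₁.trace + (q₂ : ℂ) * ρ₂.trace := by
      rw [hRdef]; simp [rho0, Matrix.trace_add, Matrix.trace_smul]
    rw [e, htr₁, htr₂, mul_one, mul_one, ← Complex.ofReal_add, hq, Complex.ofReal_one]
  have hsum1 : ρ11 + ρ22 = 1 := by
    have h' : R.trace = ((ρ11 + ρ22 : ℝ) : ℂ) := by
      rw [hdiag, Matrix.trace_add, Matrix.trace_smul, Matrix.trace_smul, htrP₁, htrP₂]
      simp only [smul_eq_mul, mul_one]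
      push_cast
      ring
    rw [htrR] at h'
    exact_mod_cast h'.symm
  set s1 := Real.sqrt ρ11 with hs1
  set s2 := Real.sqrt ρ22 with hs2
  have hs1sq : (s1 : ℂ) * (s1 : ℂ) = (ρ11 : ℂ) := by
    rw [← Complex.ofReal_mul, hs1, Real.mul_self_sqrt hρ11pos.le]
  have hs2sq : (s2 : ℂ) * (s2 : ℂ) = (ρ22 : ℂ) := by
    rw [← Complex.ofReal_mul, hs2, Real.mul_self_sqrt hρ22pos.le]
  have hDpsd : ((s1 : ℂ) • P₁ + (s2 : ℂ) • P₂).PosSemidef :=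
    (psd_vmv ν₁ s1 (Real.sqrt_nonneg _)).add (psd_vmv ν₂ s2 (Real.sqrt_nonneg _))
  have hDD : ((s1 : ℂ) • P₁ + (s2 : ℂ) • P₂) * ((s1 : ℂ) • P₁ + (s2 : ℂ) • P₂) = R := by
    have e : ((s1 : ℂ) • P₁ + (s2 : ℂ) • P₂) * ((s1 : ℂ) • P₁ + (s2 : ℂ) • P₂)
        = ((s1:ℂ)*(s1:ℂ)) • (P₁*P₁) + ((s1:ℂ)*(s2:ℂ)) • (P₁*P₂)
          + ((s2:ℂ)*(s1:ℂ)) • (P₂*P₁) + ((s2:ℂ)*(s2:ℂ)) • (P₂*P₂) := by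
      simp only [add_mul, mul_add, smul_mul_assoc, mul_smul_comm, smul_smul, smul_add]
      module
    rw [e, hP11, hP12, hP21, hP22, smul_zero, smul_zero, add_zero, add_zero,
      hs1sq, hs2sq, ← hdiag]
  have hSD : S = (s1 : ℂ) • P₁ + (s2 : ℂ) • P₂ :=
    open scoped MatrixOrder in
    (CFC.sq_eq_sq_iff S _ hS.nonneg hDpsd.nonneg).mp (by rw [pow_two, pow_two, hSS, hDD])
  have hSP₁ : S * P₁ = (s1 : ℂ) • P₁ := by
    rw [hSD, add_mul, smul_mul_assoc, smul_mul_assoc, hP11, hP21, smul_zero, add_zero]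
  have hSP₂ : S * P₂ = (s2 : ℂ) • P₂ := by
    rw [hSD, add_mul, smul_mul_assoc, smul_mul_assoc, hP12, hP22, smul_zero, zero_add]
  have hP₁S : P₁ * S = (s1 : ℂ) • P₁ := by
    rw [hSD, mul_add, mul_smul_comm, mul_smul_comm, hP11, hP12, smul_zero, add_zero]
  have hP₂S : P₂ * S = (s2 : ℂ) • P₂ := by
    rw [hSD, mul_add, mul_smul_comm, mul_smul_comm, hP21, hP22, smul_zero, zero_add]
  have hconj₁ : ∀ c : ℂ, S * (c • P₁) * S = (c * (ρ11 : ℂ)) • P₁ := by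
    intro c
    calc S * (c • P₁) * S = c • (S * P₁ * S) := by
          rw [mul_smul_comm, smul_mul_assoc]
      _ = c • ((s1:ℂ) • (P₁ * S)) := by rw [hSP₁, smul_mul_assoc]
      _ = (c * (ρ11:ℂ)) • P₁ := by
          rw [hP₁S, smul_smul, smul_smul, mul_assoc, hs1sq]
  have hconj₂ : ∀ c : ℂ, S * (c • P₂) * S = (c * (ρ22 : ℂ)) • P₂ := by
    intro c
    calc S * (c • P₂) * S = c • (S * P₂ * S) := by
          rw [mul_smul_comm, smul_mul_assoc]
      _ = c • ((s2:ℂ) • (P₂ * S)) := by rw [hSP₂, smul_mul_assoc]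
      _ = (c * (ρ22:ℂ)) • P₂ := by
          rw [hP₂S, smul_smul, smul_smul, mul_assoc, hs2sq]
  have hq2ρ₂ : (q₂:ℂ) • ρ₂ = (((1-C₁:ℝ):ℂ) * (ρ11:ℂ)) • P₁ + ((C₂:ℂ) * (ρ22:ℂ)) • P₂ := by
    rw [← hbar₂]
    have e : S * (((1-C₁:ℝ):ℂ) • P₁ + (C₂:ℂ) • P₂) * S
        = S * (((1-C₁:ℝ):ℂ) • P₁) * S + S * ((C₂:ℂ) • P₂) * S := by
      rw [mul_add, add_mul]
    rw [e, hconj₁, hconj₂]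
  have hq1ρ₁ : (q₁:ℂ) • ρ₁ = ((C₁:ℂ) * (ρ11:ℂ)) • P₁ + (((1-C₂:ℝ):ℂ) * (ρ22:ℂ)) • P₂ := by
    rw [← hbar₁]
    have e : S * ((C₁:ℂ) • P₁ + ((1-C₂:ℝ):ℂ) • P₂) * S
        = S * ((C₁:ℂ) • P₁) * S + S * (((1-C₂:ℝ):ℂ) • P₂) * S := by
      rw [mul_add, add_mul]
    rw [e, hconj₁, hconj₂]
  -- the explicit POVM
  set c0 : ℝ := (Q - ρ11)/ρ22 with hc0
  set c2 : ℝ := (1 - Q)/ρ22 with hc2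
  have hc0nn : 0 ≤ c0 := div_nonneg (by linarith) hρ22pos.le
  have hc2nn : 0 ≤ c2 := div_nonneg (by linarith) hρ22pos.le
  have hc0ρ : (c0:ℂ) * (ρ22:ℂ) = ((Q - ρ11 : ℝ):ℂ) := by
    rw [← Complex.ofReal_mul]
    congr 1
    rw [hc0]
    field_simp
  have hc2ρ : (c2:ℂ) * (ρ22:ℂ) = ((1 - Q : ℝ):ℂ) := by
    rw [← Complex.ofReal_mul]
    congr 1
    rw [hc2]
    field_simp
  have hM₀psd : (P₁ + (c0:ℂ) • P₂).PosSemidef := by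
    have h1 : ((1:ℝ):ℂ) • P₁ = P₁ := by norm_num
    have := (psd_vmv ν₁ 1 zero_le_one).add (psd_vmv ν₂ c0 hc0nn)
    rwa [h1] at this
  have hPOVM : IsPOVM (P₁ + (c0:ℂ) • P₂) 0 ((c2:ℂ) • P₂) := by
    refine ⟨hM₀psd, Matrix.PosSemidef.zero, psd_vmv ν₂ c2 hc2nn, ?_⟩
    have hcc : (c0:ℂ) + (c2:ℂ) = 1 := by
      rw [← Complex.ofReal_add]
      have : c0 + c2 = 1 := by
        rw [hc0, hc2]
        field_simp
        linarith
      rw [this, Complex.ofReal_one]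
    calc P₁ + (c0:ℂ) • P₂ + 0 + (c2:ℂ) • P₂
        = P₁ + ((c0:ℂ) + (c2:ℂ)) • P₂ := by rw [add_zero, add_smul, add_assoc]
      _ = P₁ + P₂ := by rw [hcc, one_smul]
      _ = 1 := hres
  have hPI : PIof q₁ q₂ ρ₁ ρ₂ (P₁ + (c0:ℂ) • P₂) = Q := by
    have hmul : R * (P₁ + (c0:ℂ) • P₂) = (ρ11:ℂ) • P₁ + ((ρ22:ℂ)*(c0:ℂ)) • P₂ := by
      rw [hdiag]
      have e : ((ρ11:ℂ) • P₁ + (ρ22:ℂ) • P₂) * (P₁ + (c0:ℂ) • P₂)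
          = (ρ11:ℂ) • (P₁*P₁) + ((ρ11:ℂ)*(c0:ℂ)) • (P₁*P₂)
            + (ρ22:ℂ) • (P₂*P₁) + ((ρ22:ℂ)*(c0:ℂ)) • (P₂*P₂) := by
        simp only [add_mul, mul_add, smul_mul_assoc, mul_smul_comm, smul_smul, smul_add]
        module
      rw [e, hP11, hP12, hP21, hP22, smul_zero, smul_zero, add_zero, add_zero]
    show (Matrix.trace (R * (P₁ + (c0:ℂ) • P₂))).re = Q
    rw [hmul, Matrix.trace_add, Matrix.trace_smul, Matrix.trace_smul, htrP₁, htrP₂,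
      smul_eq_mul, smul_eq_mul, mul_one, mul_one, mul_comm ((ρ22:ℂ)), hc0ρ,
      ← Complex.ofReal_add, Complex.ofReal_re]
    ring
  have hPcor : Pcor q₁ q₂ ρ₁ ρ₂ 0 ((c2:ℂ) • P₂) = C₂ * (1 - Q) := by
    show q₁ * (Matrix.trace (ρ₁ * 0)).re + q₂ * (Matrix.trace (ρ₂ * ((c2:ℂ) • P₂))).re
        = C₂ * (1 - Q)
    rw [Matrix.mul_zero, Matrix.trace_zero, Complex.zero_re, mul_zero, zero_add]
    have key : (q₂:ℂ) * Matrix.trace (ρ₂ * ((c2:ℂ) • P₂)) = ((C₂ * (1-Q) : ℝ):ℂ) := by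
      have e1 : (q₂:ℂ) * Matrix.trace (ρ₂ * ((c2:ℂ) • P₂))
          = Matrix.trace (((q₂:ℂ) • ρ₂) * ((c2:ℂ) • P₂)) := by
        rw [Matrix.smul_mul, Matrix.trace_smul, smul_eq_mul]
      rw [e1, hq2ρ₂]
      have e2 : ((((1-C₁:ℝ):ℂ)*(ρ11:ℂ)) • P₁ + ((C₂:ℂ)*(ρ22:ℂ)) • P₂) * ((c2:ℂ) • P₂)
          = ((((1-C₁:ℝ):ℂ)*(ρ11:ℂ))*(c2:ℂ)) • (P₁*P₂)
            + (((C₂:ℂ)*(ρ22:ℂ))*(c2:ℂ)) • (P₂*P₂) := by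
        simp only [add_mul, mul_add, smul_mul_assoc, mul_smul_comm, smul_smul, smul_add]
        module
      rw [e2, hP12, hP22, smul_zero, zero_add, Matrix.trace_smul, htrP₂, smul_eq_mul,
        mul_one, mul_assoc, mul_comm ((ρ22:ℂ)), hc2ρ]
      push_cast
      ring
    have := congrArg Complex.re key
    rwa [Complex.re_ofReal_mul, Complex.ofReal_re] at this
  have hSM₀S : S * (P₁ + (c0:ℂ) • P₂) * S
      = (ρ11 : ℂ) • P₁ + ((Q - ρ11 : ℝ) : ℂ) • P₂ := by
    have e : S * (P₁ + (c0:ℂ) • P₂) * S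
        = S * ((1:ℂ) • P₁) * S + S * ((c0:ℂ) • P₂) * S := by
      rw [one_smul, mul_add, add_mul]
    rw [e, hconj₁, hconj₂, one_mul, hc0ρ]
  have hSM₂S : S * ((c2:ℂ) • P₂) * S = ((1 - Q : ℝ) : ℂ) • P₂ := by
    rw [hconj₂, hc2ρ]
  -- upper bound
  have hC₂pos : 0 < C₂ := by linarith
  have hgapnn : (0:ℝ) ≤ C₁ + C₂ - 1 := by linarith
  have hub : ∀ x ∈ {x : ℝ | ∃ M₀ M₁ M₂, IsPOVM M₀ M₁ M₂ ∧
      PIof q₁ q₂ ρ₁ ρ₂ M₀ = Q ∧ Pcor q₁ q₂ ρ₁ ρ₂ M₁ M₂ = x}, x ≤ C₂ * (1 - Q) := by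
    rintro x ⟨N₀, N₁, N₂, ⟨hN₀, hN₁, hN₂, hNsum⟩, hNPI, rfl⟩
    have hT : ∀ {N : Matrix (Fin 2) (Fin 2) ℂ}, N.PosSemidef → (S * N * S).PosSemidef := by
      intro N hN
      have := hN.mul_mul_conjTranspose_same S
      rwa [hS.1.eq] at this
    have hT₀ := hT hN₀
    have hT₁ := hT hN₁
    have hT₂ := hT hN₂
    have cyc : ∀ N : Matrix (Fin 2) (Fin 2) ℂ, (S * N * S).trace = (R * N).trace := by
      intro N
      calc ((S*N)*S).trace = (S*(S*N)).trace := Matrix.trace_mul_comm _ _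
        _ = ((S*S)*N).trace := by rw [Matrix.mul_assoc]
        _ = (R*N).trace := by rw [hSS]
    have barcyc : ∀ (A N : Matrix (Fin 2) (Fin 2) ℂ),
        ((S * A * S) * N).trace = (A * (S * N * S)).trace := by
      intro A N
      calc ((S*A*S)*N).trace
          = ((S*A)*(S*N)).trace := congrArg Matrix.trace (Matrix.mul_assoc (S*A) S N)
        _ = ((S*N)*(S*A)).trace := Matrix.trace_mul_comm _ _
        _ = (((S*N)*S)*A).trace := congrArg Matrix.trace (Matrix.mul_assoc (S*N) S A).symm
        _ = (A*((S*N)*S)).trace := Matrix.trace_mul_comm _ _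
    have hgap₁ : ((C₁:ℂ)) • (1:Matrix (Fin 2) (Fin 2) ℂ)
        - ((C₁:ℂ) • P₁ + ((1-C₂:ℝ):ℂ) • P₂) = ((C₁+C₂-1:ℝ):ℂ) • P₂ := by
      rw [← hres]
      push_cast
      module
    have hgap₂ : ((C₂:ℂ)) • (1:Matrix (Fin 2) (Fin 2) ℂ)
        - (((1-C₁:ℝ):ℂ) • P₁ + (C₂:ℂ) • P₂) = ((C₁+C₂-1:ℝ):ℂ) • P₁ := by
      rw [← hres]
      push_cast
      module
    have hgappsd₁ : (((C₁+C₂-1:ℝ):ℂ) • P₂).PosSemidef := psd_vmv ν₂ _ hgapnn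
    have hgappsd₂ : (((C₁+C₂-1:ℝ):ℂ) • P₁).PosSemidef := psd_vmv ν₁ _ hgapnn
    have ineq : ∀ (A : Matrix (Fin 2) (Fin 2) ℂ) (Cv : ℝ) (T : Matrix (Fin 2) (Fin 2) ℂ)
        (G : Matrix (Fin 2) (Fin 2) ℂ) (hG : G.PosSemidef)
        (hgap : (Cv:ℂ) • (1:Matrix (Fin 2) (Fin 2) ℂ) - A = G) (hTpsd : T.PosSemidef),
        ((A * T).trace).re ≤ Cv * (T.trace).re := by
      intro A Cv T G hG hgap hTpsd
      have h0 := trace_mul_re_nonneg hG hTpsd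
      have e : (G * T).trace = (Cv:ℂ) * T.trace - (A * T).trace := by
        rw [← hgap, sub_mul, Matrix.trace_sub, smul_mul_assoc, one_mul,
          Matrix.trace_smul, smul_eq_mul]
      rw [e] at h0
      rw [Complex.sub_re, Complex.re_ofReal_mul] at h0
      linarith
    have ineq₁ := ineq ((C₁:ℂ) • P₁ + ((1-C₂:ℝ):ℂ) • P₂) C₁ (S*N₁*S) _ hgappsd₁ hgap₁ hT₁
    have ineq₂ := ineq (((1-C₁:ℝ):ℂ) • P₁ + (C₂:ℂ) • P₂) C₂ (S*N₂*S) _ hgappsd₂ hgap₂ hT₂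
    have hval₁ : q₁ * ((ρ₁ * N₁).trace).re
        = ((((C₁:ℂ) • P₁ + ((1-C₂:ℝ):ℂ) • P₂) * (S*N₁*S)).trace).re := by
      have e : ((q₁:ℂ) • ρ₁ * N₁).trace
          = (((C₁:ℂ) • P₁ + ((1-C₂:ℝ):ℂ) • P₂) * (S*N₁*S)).trace := by
        rw [← hbar₁, barcyc]
      have lhs : ((q₁:ℂ) • ρ₁ * N₁).trace = (q₁:ℂ) * ((ρ₁*N₁).trace) := by
        rw [Matrix.smul_mul, Matrix.trace_smul, smul_eq_mul]
      rw [← e, lhs, Complex.re_ofReal_mul]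
    have hval₂ : q₂ * ((ρ₂ * N₂).trace).re
        = (((((1-C₁:ℝ):ℂ) • P₁ + (C₂:ℂ) • P₂) * (S*N₂*S)).trace).re := by
      have e : ((q₂:ℂ) • ρ₂ * N₂).trace
          = ((((1-C₁:ℝ):ℂ) • P₁ + (C₂:ℂ) • P₂) * (S*N₂*S)).trace := by
        rw [← hbar₂, barcyc]
      have lhs : ((q₂:ℂ) • ρ₂ * N₂).trace = (q₂:ℂ) * ((ρ₂*N₂).trace) := by
        rw [Matrix.smul_mul, Matrix.trace_smul, smul_eq_mul]
      rw [← e, lhs, Complex.re_ofReal_mul]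
    have htsum : ((S*N₀*S).trace).re + ((S*N₁*S).trace).re + ((S*N₂*S).trace).re = 1 := by
      have e : (S*N₀*S).trace + (S*N₁*S).trace + (S*N₂*S).trace = 1 := by
        rw [cyc, cyc, cyc, ← Matrix.trace_add, ← Matrix.trace_add, ← Matrix.mul_add,
          ← Matrix.mul_add, hNsum, Matrix.mul_one, htrR]
      have := congrArg Complex.re e
      simpa [Complex.add_re] using this
    have ht₀ : ((S*N₀*S).trace).re = Q := by
      rw [cyc]
      exact hNPI
    have ht₁nn : 0 ≤ ((S*N₁*S).trace).re := trace_re_nonneg hT₁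
    have ht₂nn : 0 ≤ ((S*N₂*S).trace).re := trace_re_nonneg hT₂
    have hts : ((S*N₁*S).trace).re + ((S*N₂*S).trace).re = 1 - Q := by linarith
    show q₁ * ((ρ₁ * N₁).trace).re + q₂ * ((ρ₂ * N₂).trace).re ≤ C₂ * (1 - Q)
    rw [hval₁, hval₂]
    have hfin : C₂ * ((S*N₁*S).trace).re + C₂ * ((S*N₂*S).trace).re = C₂ * (1 - Q) := by
      rw [← hts]; ring
    have hmono := mul_nonneg (sub_nonneg.mpr hC12) ht₁nn
    have hexp : (C₂ - C₁) * ((S*N₁*S).trace).re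
        = C₂ * ((S*N₁*S).trace).re - C₁ * ((S*N₁*S).trace).re := by ring
    linarith [ineq₁, ineq₂]
  have hmem : C₂ * (1 - Q) ∈ {x : ℝ | ∃ M₀ M₁ M₂, IsPOVM M₀ M₁ M₂ ∧
      PIof q₁ q₂ ρ₁ ρ₂ M₀ = Q ∧ Pcor q₁ q₂ ρ₁ ρ₂ M₁ M₂ = x} :=
    ⟨P₁ + (c0:ℂ) • P₂, 0, (c2:ℂ) • P₂, hPOVM, hPI, hPcor⟩
  refine ⟨IsGreatest.csSup_eq ⟨hmem, hub⟩,
    P₁ + (c0:ℂ) • P₂, 0, (c2:ℂ) • P₂, hPOVM, hPI, hPcor, hSM₀S, rfl, hSM₂S⟩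


end FRIR
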